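/- Let (X,d), (Y,ρ) be semimetric spaces and f: X→Y a bijective η-quasisymmetric mapping. If η(k)·η(1/k) = 1 for all k>0, then f is a weak similarity; equivalently, for all x,y,z,w∈X: d(x,y) < d(z,w) implies ρ(f(x),f(y)) < ρ(f(z),f(w)), and d(x,y) = d(z,w) implies ρ(f(x),f(y)) = ρ(f(z),f(w)). -/
import Mathlib


open Set Filter Topology

structure IsSemimetric {X : Type*} (d : X → X → ℝ) : Prop where
  nonneg : ∀ x y, 0 ≤ d x y
  eq_iff : ∀ x y, d x y = 0 ↔ x = y
  symm : ∀ x y, d x y = d y x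

/-- `η` is a homeomorphism of `[0,∞)` onto itself (increasing, `η 0 = 0`). -/
structure IsQSHomeo (η : ℝ → ℝ) : Prop where
  maps : ∀ t, 0 ≤ t → 0 ≤ η t
  zero : η 0 = 0
  strictMonoOn : StrictMonoOn η (Set.Ici 0)
  surjOn : ∀ s, 0 ≤ s → ∃ t, 0 ≤ t ∧ η t = s
  continuousOn : ContinuousOn η (Set.Ici 0)

/-- `f` is an `η`-quasisymmetric mapping between the semimetric spaces `(X,d)` and `(Y,ρ)`. -/
def IsQuasisymmetric {X Y : Type*} (d : X → X → ℝ) (ρ : Y → Y → ℝ)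
    (η : ℝ → ℝ) (f : X → Y) : Prop :=
  IsQSHomeo η ∧ ∀ (x a b : X) (t : ℝ), 0 < t →
    d x a ≤ t * d x b → ρ (f x) (f a) ≤ η t * ρ (f x) (f b)

structure IsTriangleFunction {X : Type*} (d : X → X → ℝ) (Φ : ℝ → ℝ → ℝ) : Prop where
  symm : ∀ u v, Φ u v = Φ v u
  mono : ∀ u u' v v', 0 ≤ u → u ≤ u' → 0 ≤ v → v ≤ v' → Φ u v ≤ Φ u' v'
  zero : Φ 0 0 = 0
  tri : ∀ x y z, d x y ≤ Φ (d x z) (d y z)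

def IsPtolemaic {X : Type*} (d : X → X → ℝ) : Prop :=
  ∀ x y z t : X, d x z * d t y ≤ d x y * d t z + d x t * d y z

def distSet {X : Type*} (d : X → X → ℝ) (A : Set X) : Set ℝ :=
  {r | ∃ x ∈ A, ∃ y ∈ A, r = d x y}

noncomputable def sdiam {X : Type*} (d : X → X → ℝ) (A : Set X) : ℝ :=
  sSup (distSet d A)

def spectrum' {X : Type*} (d : X → X → ℝ) : Set ℝ := {r | ∃ x y : X, r = d x y}

def IsWeakSimilarity {X Y : Type*} (d : X → X → ℝ) (ρ : Y → Y → ℝ)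
    (f : X → Y) (φ : ℝ → ℝ) : Prop :=
  Function.Bijective f ∧ StrictMonoOn φ (spectrum' d) ∧
    φ '' spectrum' d = spectrum' ρ ∧ ∀ x y, φ (d x y) = ρ (f x) (f y)

/-- The topology `τ_d` generated by a semimetric `d`. -/
def tauD {X : Type*} (d : X → X → ℝ) : TopologicalSpace X where
  IsOpen A := ∀ a ∈ A, ∃ r > 0, {x | d a x < r} ⊆ A
  isOpen_univ := fun _ _ => ⟨1, one_pos, fun _ _ => trivial⟩
  isOpen_inter := fun A B hA hB a ha => by
    obtain ⟨r1, hr1, h1⟩ := hA a ha.1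
    obtain ⟨r2, hr2, h2⟩ := hB a ha.2
    refine ⟨min r1 r2, lt_min hr1 hr2, fun x hx => ⟨h1 ?_, h2 ?_⟩⟩
    · have hx' : d a x < min r1 r2 := hx
      exact lt_of_lt_of_le hx' (min_le_left r1 r2)
    · have hx' : d a x < min r1 r2 := hx
      exact lt_of_lt_of_le hx' (min_le_right r1 r2)
  isOpen_sUnion := fun S hS a ha => by
    obtain ⟨A, hA, haA⟩ := ha
    obtain ⟨r, hr, h⟩ := hS A hA a haA
    exact ⟨r, hr, fun x hx => ⟨A, hA, h hx⟩⟩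

theorem stmt_19 {X Y : Type*} (d : X → X → ℝ) (ρ : Y → Y → ℝ) (η : ℝ → ℝ) (f : X → Y)
    (hd : IsSemimetric d) (hρ : IsSemimetric ρ)
    (hbij : Function.Bijective f)
    (hq : IsQuasisymmetric d ρ η f)
    (hcond : ∀ k : ℝ, 0 < k → η k * η (1 / k) = 1) :
    (∃ φ : ℝ → ℝ, IsWeakSimilarity d ρ f φ) ∧
      (∀ x y z w : X, d x y < d z w → ρ (f x) (f y) < ρ (f z) (f w)) ∧
      (∀ x y z w : X, d x y = d z w → ρ (f x) (f y) = ρ (f z) (f w)) := by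
  classical
  obtain ⟨hη, hqs⟩ := hq
  have hηpos : ∀ t : ℝ, 0 < t → 0 < η t := by
    intro t ht
    rcases (hη.maps t ht.le).lt_or_eq with h' | h'
    · exact h'
    · exfalso
      have h := hcond t ht
      rw [← h'] at h; simp at h
  have hη1 : η 1 = 1 := by
    have h := hcond 1 one_pos
    simp only [one_div, inv_one] at h
    nlinarith [hη.maps 1 zero_le_one]
  have hdpos : ∀ x y : X, x ≠ y → 0 < d x y := by
    intro x y hxy
    rcases (hd.nonneg x y).lt_or_eq with h | h
    · exact h
    · exact absurd ((hd.eq_iff x y).mp h.symm) hxy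
  have hρpos : ∀ x y : X, x ≠ y → 0 < ρ (f x) (f y) := by
    intro x y hxy
    have hfne : f x ≠ f y := fun h => hxy (hbij.1 h)
    rcases (hρ.nonneg (f x) (f y)).lt_or_eq with h | h
    · exact h
    · exact absurd ((hρ.eq_iff _ _).mp h.symm) hfne
  -- key lemma: exact ratio relation at a shared point
  have L : ∀ x a b : X, 0 < d x a → 0 < d x b →
      ρ (f x) (f a) = η (d x a / d x b) * ρ (f x) (f b) := by
    intro x a b ha hb
    set t := d x a / d x b with ht
    have htpos : 0 < t := div_pos ha hb
    have h1 : ρ (f x) (f a) ≤ η t * ρ (f x) (f b) := by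
      apply hqs x a b t htpos
      rw [ht, div_mul_cancel₀ _ hb.ne']
    have h2 : ρ (f x) (f b) ≤ η (1 / t) * ρ (f x) (f a) := by
      apply hqs x b a (1 / t) (by positivity)
      rw [ht, one_div_div, div_mul_cancel₀ _ ha.ne']
    have hc := hcond t htpos
    have hb' : 0 < d x b := hb
    have hbne : x ≠ b := fun e => by rw [(hd.eq_iff x b).mpr e] at hb; exact lt_irrefl 0 hb
    have hρb : 0 < ρ (f x) (f b) := hρpos x b hbne
    nlinarith [hηpos t htpos, hηpos (1 / t) (by positivity : (0:ℝ) < 1 / t),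
      mul_le_mul_of_nonneg_left h2 (hηpos t htpos).le]
  -- equality preservation
  have E : ∀ x y z w : X, d x y = d z w → ρ (f x) (f y) = ρ (f z) (f w) := by
    intro x y z w h
    by_cases h0 : d x y = 0
    · have hxy : x = y := (hd.eq_iff x y).mp h0
      have hzw : z = w := (hd.eq_iff z w).mp (h ▸ h0)
      subst hxy; subst hzw
      rw [(hρ.eq_iff (f x) (f x)).mpr rfl, (hρ.eq_iff (f z) (f z)).mpr rfl]
    · have ha : 0 < d x y := (hd.nonneg x y).lt_of_ne (Ne.symm h0)
      have hb : 0 < d z w := h ▸ ha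
      by_cases hyz : y = z
      · subst hyz
        have e := L y x w (by rw [hd.symm]; exact ha) hb
        rw [hd.symm y x, h, div_self hb.ne', hη1, one_mul] at e
        rw [hρ.symm (f x) (f y)]; exact e
      · have hc : 0 < d y z := hdpos y z hyz
        have e1 := L y x z (by rw [hd.symm]; exact ha) hc
        have e2 := L z y w (by rw [hd.symm]; exact hc) hb
        rw [hd.symm y x] at e1
        rw [hd.symm z y] at e2
        have hmul : η (d x y / d y z) * η (d y z / d x y) = 1 := by
          have := hcond (d x y / d y z) (div_pos ha hc)
          rwa [one_div_div] at this
        calc ρ (f x) (f y) = ρ (f y) (f x) := hρ.symm _ _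
          _ = η (d x y / d y z) * ρ (f y) (f z) := e1
          _ = η (d x y / d y z) * ρ (f z) (f y) := by rw [hρ.symm (f y) (f z)]
          _ = η (d x y / d y z) * (η (d y z / d z w) * ρ (f z) (f w)) := by rw [e2]
          _ = ρ (f z) (f w) := by rw [← h]; rw [← mul_assoc, hmul, one_mul]
  -- strict order preservation
  have S : ∀ x y z w : X, d x y < d z w → ρ (f x) (f y) < ρ (f z) (f w) := by
    intro x y z w h
    have hb : 0 < d z w := lt_of_le_of_lt (hd.nonneg x y) h
    have hzw : z ≠ w := fun e => by
      rw [(hd.eq_iff z w).mpr e] at hb; exact lt_irrefl 0 hb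
    have hρb : 0 < ρ (f z) (f w) := hρpos z w hzw
    by_cases h0 : d x y = 0
    · have hxy : x = y := (hd.eq_iff x y).mp h0
      subst hxy
      rw [(hρ.eq_iff (f x) (f x)).mpr rfl]; exact hρb
    · have ha : 0 < d x y := (hd.nonneg x y).lt_of_ne (Ne.symm h0)
      by_cases hyz : y = z
      · subst hyz
        have e := L y x w (by rw [hd.symm]; exact ha) hb
        rw [hd.symm y x] at e
        have hlt : η (d x y / d y w) < 1 := by
          rw [← hη1]
          exact hη.strictMonoOn (Set.mem_Ici.mpr (by positivity)) (Set.mem_Ici.mpr zero_le_one)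
            ((div_lt_one hb).mpr h)
        calc ρ (f x) (f y) = ρ (f y) (f x) := hρ.symm _ _
          _ = η (d x y / d y w) * ρ (f y) (f w) := e
          _ < 1 * ρ (f y) (f w) := by
              exact mul_lt_mul_of_pos_right hlt hρb
          _ = ρ (f y) (f w) := one_mul _
      · have hc : 0 < d y z := hdpos y z hyz
        have hρc : 0 < ρ (f y) (f z) := hρpos y z hyz
        have e1 := L y x z (by rw [hd.symm]; exact ha) hc
        have e2 := L z w y hb (by rw [hd.symm]; exact hc)
        rw [hd.symm y x] at e1
        rw [hd.symm z y] at e2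
        have hlt : η (d x y / d y z) < η (d z w / d y z) := by
          exact hη.strictMonoOn (Set.mem_Ici.mpr (by positivity)) (Set.mem_Ici.mpr (by positivity))
            ((div_lt_div_iff_of_pos_right hc).mpr h)
        calc ρ (f x) (f y) = ρ (f y) (f x) := hρ.symm _ _
          _ = η (d x y / d y z) * ρ (f y) (f z) := e1
          _ < η (d z w / d y z) * ρ (f y) (f z) := mul_lt_mul_of_pos_right hlt hρc
          _ = η (d z w / d y z) * ρ (f z) (f y) := by rw [hρ.symm (f y) (f z)]
          _ = ρ (f z) (f w) := e2.symm
  -- build φ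
  refine ⟨?_, S, E⟩
  set φ : ℝ → ℝ := fun r =>
    if h : r ∈ spectrum' d then ρ (f h.choose) (f h.choose_spec.choose) else 0 with hφdef
  have hφ : ∀ x y : X, φ (d x y) = ρ (f x) (f y) := by
    intro x y
    have hm : d x y ∈ spectrum' d := ⟨x, y, rfl⟩
    rw [hφdef]
    simp only [dif_pos hm]
    exact E _ _ x y hm.choose_spec.choose_spec.symm
  refine ⟨φ, hbij, ?_, ?_, hφ⟩
  · rintro r ⟨x, y, rfl⟩ s ⟨z, w, rfl⟩ hrs
    rw [hφ, hφ]
    exact S x y z w hrs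
  · ext s
    constructor
    · rintro ⟨r, ⟨x, y, rfl⟩, rfl⟩
      exact ⟨f x, f y, hφ x y⟩
    · rintro ⟨u, v, rfl⟩
      obtain ⟨x, rfl⟩ := hbij.2 u
      obtain ⟨y, rfl⟩ := hbij.2 v
      exact ⟨d x y, ⟨x, y, rfl⟩, hφ x y⟩
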